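/- For every a > 0, c > 0, b ≥ 0 and every complex number s with −b/a < Re(s) < c/a, the function t ↦ t^{s−1}·ψ_{a,b,c}(t) is integrable on (0,∞) and ∫_0^∞ t^{s−1}·ψ_{a,b,c}(t) dt = Γ(a·s + b)·Γ(c − a·s), where Γ is the complex Gamma function. -/

import Mathlib

open MeasureTheory Set

open Complex in
lemma beta_Ioi_aux (r : ℝ) (p : ℂ) (hp : 0 < p.re) (hpr : p.re < r) :
    IntegrableOn (fun u : ℝ => (u : ℂ) ^ (p - 1) * (((1 + u) ^ (-r) : ℝ) : ℂ)) (Ioi (0 : ℝ)) ∧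
    ∫ u in Ioi (0 : ℝ), (u : ℂ) ^ (p - 1) * (((1 + u) ^ (-r) : ℝ) : ℂ)
      = Complex.Gamma p * Complex.Gamma (↑r - p) / Complex.Gamma ↑r := by
  have hr : 0 < r := hp.trans hpr
  set F : ℝ → ℂ := fun u => (u : ℂ) ^ (p - 1) * (((1 + u) ^ (-r) : ℝ) : ℂ) with hF
  set g : ℝ → ℝ := fun x => x / (1 - x) with hg
  have hg' : ∀ x ∈ Ioo (0:ℝ) 1, HasDerivWithinAt g (((1 - x) ^ 2)⁻¹) (Ioo 0 1) x := by
    intro x hx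
    have h1x : 1 - x ≠ 0 := by rcases hx with ⟨_, h2⟩; intro h; linarith [h]
    have := (hasDerivAt_id x).div ((hasDerivAt_const x (1:ℝ)).sub (hasDerivAt_id x)) h1x
    convert this.hasDerivWithinAt using 1
    case e'_8 => rfl
    case e'_9 => simp only [Pi.sub_apply, id]; ring
    all_goals rfl
  have hinj : InjOn g (Ioo (0:ℝ) 1) := by
    intro x hx y hy h
    have h1x : 1 - x ≠ 0 := by rcases hx with ⟨_, h2⟩; intro h; linarith [h]
    have h1y : 1 - y ≠ 0 := by rcases hy with ⟨_, h2⟩; intro h; linarith [h]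
    rw [hg, div_eq_div_iff h1x h1y] at h
    nlinarith [h]
  have himg : g '' Ioo (0:ℝ) 1 = Ioi (0:ℝ) := by
    ext u
    constructor
    · rintro ⟨x, ⟨hx0, hx1⟩, rfl⟩
      exact div_pos hx0 (by linarith)
    · intro hu
      have hu' : (0:ℝ) < u := mem_Ioi.mp hu
      refine ⟨u / (1 + u), ⟨div_pos hu' (by linarith), ?_⟩, ?_⟩
      · rw [div_lt_one (by linarith)]; linarith
      · have h1u : (1:ℝ) + u ≠ 0 := by positivity
        rw [hg]; field_simp; ring
  have keyEq : ∀ x ∈ Ioo (0:ℝ) 1,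
      |((1 - x) ^ 2)⁻¹| • F (g x)
        = (x : ℂ) ^ (p - 1) * ((1 : ℂ) - x) ^ ((↑r - p) - 1) := by
    intro x hx
    obtain ⟨hx0, hx1⟩ := hx
    have h1x : (0:ℝ) < 1 - x := by linarith
    have h1xc : ((1:ℂ) - x) ≠ 0 := by
      rw [show ((1:ℂ) - x) = ((1 - x : ℝ) : ℂ) by push_cast; ring]
      exact_mod_cast h1x.ne'
    have hgx : 1 + g x = (1 - x)⁻¹ := by rw [hg]; field_simp; ring
    have hrp : ((1 + g x) ^ (-r) : ℝ) = (1 - x) ^ r := by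
      rw [hgx, ← Real.rpow_neg_one (1 - x), ← Real.rpow_mul h1x.le]
      norm_num
    have h1xc' : ((1 - x : ℝ) : ℂ) ≠ 0 := by exact_mod_cast h1x.ne'
    have hargne : ((1 - x : ℝ) : ℂ).arg ≠ Real.pi := by
      rw [Complex.arg_ofReal_of_nonneg h1x.le]; exact Real.pi_ne_zero.symm
    have e1 : ((g x : ℝ) : ℂ) ^ (p - 1)
        = (x : ℂ) ^ (p - 1) * ((1 - x : ℝ) : ℂ) ^ (-(p - 1)) := by
      have hgx' : g x = x * (1 - x)⁻¹ := by rw [hg]; ring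
      rw [hgx', Complex.ofReal_mul, Complex.mul_cpow_ofReal_nonneg hx0.le (inv_nonneg.mpr h1x.le),
        Complex.ofReal_inv, Complex.inv_cpow _ _ hargne, ← Complex.cpow_neg]
    have e2 : (((1 - x : ℝ) : ℂ) ^ (2 : ℕ))⁻¹ = ((1 - x : ℝ) : ℂ) ^ (-2 : ℂ) := by
      rw [show ((-2 : ℂ)) = -((2 : ℕ) : ℂ) by norm_num, Complex.cpow_neg,
        Complex.cpow_natCast]
    calc |((1 - x) ^ 2)⁻¹| • F (g x)
        = ((((1 - x) ^ 2)⁻¹ : ℝ) : ℂ)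
            * (((g x : ℝ) : ℂ) ^ (p - 1) * (((1 + g x) ^ (-r) : ℝ) : ℂ)) := by
          rw [abs_of_pos (by positivity), Complex.real_smul]
      _ = (x : ℂ) ^ (p - 1) * (((1 - x : ℝ) : ℂ) ^ (-(p - 1))
            * ((1 - x : ℝ) : ℂ) ^ (r : ℂ) * (((1 - x : ℝ) : ℂ) ^ (2 : ℕ))⁻¹) := by
          rw [e1, hrp, ← Complex.ofReal_cpow h1x.le]
          push_cast
          ring
      _ = (x : ℂ) ^ (p - 1) * ((1 - x : ℝ) : ℂ) ^ (-(p - 1) + ↑r + (-2 : ℂ)) := by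
          rw [e2, ← Complex.cpow_add _ _ h1xc', ← Complex.cpow_add _ _ h1xc']
      _ = (x : ℂ) ^ (p - 1) * ((1 : ℂ) - x) ^ ((↑r - p) - 1) := by
          push_cast
          ring_nf
  constructor
  · rw [← himg,
      integrableOn_image_iff_integrableOn_abs_deriv_smul measurableSet_Ioo hg' hinj]
    rw [integrableOn_congr_fun keyEq measurableSet_Ioo]
    exact ((Complex.betaIntegral_convergent hp
      (by simp [Complex.sub_re, Complex.ofReal_re]; linarith : 0 < (↑r - p).re)).1).mono_set
      Ioo_subset_Ioc_self
  · rw [← himg,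
      integral_image_eq_integral_abs_deriv_smul measurableSet_Ioo hg' hinj,
      setIntegral_congr_fun measurableSet_Ioo keyEq]
    have hbeta : ∫ x in Ioo (0:ℝ) 1, (x : ℂ) ^ (p - 1) * ((1 : ℂ) - x) ^ ((↑r - p) - 1)
        = Complex.betaIntegral p (↑r - p) := by
      rw [Complex.betaIntegral, intervalIntegral.integral_of_le zero_le_one,
        MeasureTheory.integral_Ioc_eq_integral_Ioo]
    rw [hbeta]
    have hrp' : 0 < ((r : ℂ) - p).re := by
      simp [Complex.sub_re, Complex.ofReal_re]; linarith
    have h := Complex.Gamma_mul_Gamma_eq_betaIntegral hp hrp'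
    rw [show p + (↑r - p) = (r : ℂ) by ring] at h
    have hΓ : Complex.Gamma (r : ℂ) ≠ 0 :=
      Complex.Gamma_ne_zero_of_re_pos (by simpa using hr)
    field_simp [h]
    rw [h]; ring

/-- The elementary function `ψ_{a,b,c}(t) = (Γ(b+c)/a) t^{b/a} (1 + t^{1/a})^{−b−c}`. -/
noncomputable def psiElem (a b c : ℝ) : ℝ → ℝ :=
  fun t => (Real.Gamma (b + c) / a) * t ^ (b / a) * (1 + t ^ (1 / a)) ^ (-b - c)

theorem stmt_5 (a b c : ℝ) (ha : 0 < a) (hc : 0 < c) (hb : 0 ≤ b) (s : ℂ)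
    (hs₁ : -(b / a) < s.re) (hs₂ : s.re < c / a) :
    IntegrableOn (fun t : ℝ => (t : ℂ) ^ (s - 1) * (psiElem a b c t : ℂ))
      (Set.Ioi (0 : ℝ)) ∧
    ∫ t in Set.Ioi (0 : ℝ), (t : ℂ) ^ (s - 1) * (psiElem a b c t : ℂ)
      = Complex.Gamma (a * s + b) * Complex.Gamma (c - a * s) := by
  have hac : (a : ℂ) ≠ 0 := by exact_mod_cast ha.ne'
  set p : ℂ := ↑a * s + ↑b with hp
  have hasb : -b < a * s.re := by
    have h := (mul_lt_mul_iff_right₀ ha).mpr hs₁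
    rwa [show a * -(b / a) = -b by field_simp [mul_comm]] at h
  have hasc : a * s.re < c := by
    have h := (mul_lt_mul_iff_right₀ ha).mpr hs₂
    rwa [show a * (c / a) = c by field_simp [mul_comm]] at h
  have hpre : 0 < p.re := by
    simp only [hp, Complex.add_re, Complex.mul_re, Complex.ofReal_re, Complex.ofReal_im,
      zero_mul, sub_zero]
    linarith
  have hprl : p.re < b + c := by
    simp only [hp, Complex.add_re, Complex.mul_re, Complex.ofReal_re, Complex.ofReal_im,
      zero_mul, sub_zero]
    linarith
  have key := beta_Ioi_aux (b + c) p hpre hprl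
  have hg' : ∀ u ∈ Ioi (0:ℝ), HasDerivWithinAt (fun x : ℝ => x ^ a)
      (a * u ^ (a - 1)) (Ioi 0) u := fun u hu =>
    (Real.hasDerivAt_rpow_const (Or.inl (mem_Ioi.mp hu).ne')).hasDerivWithinAt
  have hinj : InjOn (fun x : ℝ => x ^ a) (Ioi (0:ℝ)) :=
    (Real.rpow_left_injOn ha.ne').mono fun x hx => (mem_Ioi.mp hx).le
  have himg : (fun x : ℝ => x ^ a) '' Ioi (0:ℝ) = Ioi (0:ℝ) := by
    ext t
    constructor
    · rintro ⟨u, hu, rfl⟩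
      exact Real.rpow_pos_of_pos (mem_Ioi.mp hu) a
    · intro ht
      exact ⟨t ^ a⁻¹, Real.rpow_pos_of_pos (mem_Ioi.mp ht) _,
        Real.rpow_inv_rpow (mem_Ioi.mp ht).le ha.ne'⟩
  have keyEq : ∀ u ∈ Ioi (0:ℝ),
      |a * u ^ (a - 1)| • (((u ^ a : ℝ) : ℂ) ^ (s - 1) * (psiElem a b c (u ^ a) : ℂ))
        = (Real.Gamma (b + c) : ℂ)
          * ((u : ℂ) ^ (p - 1) * (((1 + u) ^ (-(b + c)) : ℝ) : ℂ)) := by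
    intro u hu
    have hu : (0:ℝ) < u := hu
    have huc : (u : ℂ) ≠ 0 := by exact_mod_cast hu.ne'
    have habs : |a * u ^ (a - 1)| = a * u ^ (a - 1) := abs_of_pos (by positivity)
    have hpsi : psiElem a b c (u ^ a)
        = Real.Gamma (b + c) / a * u ^ b * (1 + u) ^ (-(b + c)) := by
      have e1 : a * (b / a) = b := by field_simp
      have e2 : a * (1 / a) = 1 := by field_simp
      simp only [psiElem]
      rw [← Real.rpow_mul hu.le, ← Real.rpow_mul hu.le, e1, e2, Real.rpow_one,
        show -b - c = -(b + c) by ring]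
    have hlog : (Complex.log ↑u * (a : ℂ)).im = 0 := by
      rw [← Complex.ofReal_log hu.le]
      simp
    have e3 : ((u ^ a : ℝ) : ℂ) ^ (s - 1) = (u : ℂ) ^ ((a : ℂ) * (s - 1)) := by
      rw [Complex.ofReal_cpow hu.le, ← Complex.cpow_mul]
      · rw [hlog]; exact neg_lt_zero.mpr Real.pi_pos
      · rw [hlog]; exact Real.pi_pos.le
    rw [habs, Complex.real_smul, hpsi, e3]
    simp only [Complex.ofReal_mul, Complex.ofReal_div, Complex.ofReal_cpow hu.le]
    push_cast
    rw [show p - 1 = ((a : ℂ) - 1) + ((a : ℂ) * (s - 1) + (b : ℂ)) by rw [hp]; ring,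
      Complex.cpow_add _ _ huc, Complex.cpow_add _ _ huc]
    field_simp
  constructor
  · rw [← himg,
      integrableOn_image_iff_integrableOn_abs_deriv_smul measurableSet_Ioi hg' hinj,
      integrableOn_congr_fun keyEq measurableSet_Ioi]
    exact key.1.const_mul _
  · rw [← himg,
      integral_image_eq_integral_abs_deriv_smul measurableSet_Ioi hg' hinj,
      setIntegral_congr_fun measurableSet_Ioi keyEq,
      MeasureTheory.integral_const_mul, key.2]
    have hne : (Real.Gamma (b + c) : ℂ) ≠ 0 := by
      exact_mod_cast (Real.Gamma_pos_of_pos (by linarith : (0:ℝ) < b + c)).ne'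
    rw [Complex.Gamma_ofReal, show ((b + c : ℝ) : ℂ) - p = ↑c - ↑a * s by rw [hp]; push_cast; ring]
    rw [hp]
    field_simp
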